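/- Let k₁, k₂, g > 0 and define the reduced planar vector field fr : ℝ² → ℝ² by fr(x₁,x₂) = (−k₁x₁x₂² + g − gx₁, k₁x₁x₂² − (k₂ + g)x₂). Then the equilibrium (1,0) is locally asymptotically attracting: there exists ε > 0 such that every differentiable curve x : ℝ → ℝ² satisfying x'(t) = fr(x(t)) for all t ≥ 0 and ‖x(0) − (1,0)‖ < ε converges to (1,0), i.e. Tendsto x atTop (𝓝 (1,0)). -/

import Mathlib

open Filter Topology

/-- The reduced planar autocatalytic CFSTR vector field. -/
def fr (k₁ k₂ g : ℝ) (x : ℝ × ℝ) : ℝ × ℝ :=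
  (-k₁ * x.1 * x.2 ^ 2 + g - g * x.1,
   k₁ * x.1 * x.2 ^ 2 - (k₂ + g) * x.2)

set_option maxHeartbeats 2000000 in
/-- The equilibrium `(1,0)` of the reduced autocatalytic CFSTR system is locally
asymptotically attracting. -/
theorem trivial_equilibrium_locally_attracting (k₁ k₂ g : ℝ)
    (hk₁ : 0 < k₁) (hk₂ : 0 < k₂) (hg : 0 < g) :
    ∃ ε > 0, ∀ x : ℝ → ℝ × ℝ, Differentiable ℝ x →
      (∀ t : ℝ, 0 ≤ t → deriv x t = fr k₁ k₂ g (x t)) →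
      ‖x 0 - ((1 : ℝ), (0 : ℝ))‖ < ε →
      Tendsto x atTop (𝓝 ((1 : ℝ), (0 : ℝ))) := by
  set δ : ℝ := min 1 ((k₂ + g) / (8 * k₁)) with hδdef
  have hδpos : 0 < δ := lt_min one_pos (by positivity)
  have hδ1 : δ ≤ 1 := min_le_left _ _
  have hδ2 : 8 * k₁ * δ ≤ k₂ + g := by
    have := min_le_right 1 ((k₂ + g) / (8 * k₁))
    rw [le_div_iff₀ (by positivity)] at this
    nlinarith
  set c : ℝ := min (2 * g) (k₂ + g) with hcdef
  have hcpos : 0 < c := lt_min (by linarith) (by linarith)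
  refine ⟨δ / 2, by positivity, fun x hx hode hinit => ?_⟩
  set u : ℝ → ℝ := fun t => (x t).1 - 1 with hu_def
  set v : ℝ → ℝ := fun t => (x t).2 with hv_def
  set W : ℝ → ℝ := fun t => u t ^ 2 + v t ^ 2 with hW_def
  -- differentiability and derivative facts
  have hu_diff : Differentiable ℝ u := by
    exact fun t => (((ContinuousLinearMap.fst ℝ ℝ ℝ).differentiable.comp hx) t).sub_const 1
  have hv_diff : Differentiable ℝ v :=
    (ContinuousLinearMap.snd ℝ ℝ ℝ).differentiable.comp hx
  have hW_diff : Differentiable ℝ W := by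
    exact fun t => ((hu_diff t).pow 2).add ((hv_diff t).pow 2)
  have hW_nonneg : ∀ t, 0 ≤ W t := fun t => by positivity
  have hderivW : ∀ t : ℝ, 0 ≤ t → HasDerivAt W
      (2 * u t * (fr k₁ k₂ g (x t)).1 + 2 * v t * (fr k₁ k₂ g (x t)).2) t := by
    intro t ht
    have hx' : HasDerivAt x (fr k₁ k₂ g (x t)) t := by
      have := (hx t).hasDerivAt
      rwa [hode t ht] at this
    have h1 : HasDerivAt (fun s => (x s).1) ((fr k₁ k₂ g (x t)).1) t :=
      (ContinuousLinearMap.fst ℝ ℝ ℝ).hasFDerivAt.comp_hasDerivAt t hx'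
    have h2 : HasDerivAt v ((fr k₁ k₂ g (x t)).2) t :=
      (ContinuousLinearMap.snd ℝ ℝ ℝ).hasFDerivAt.comp_hasDerivAt t hx'
    have hu' : HasDerivAt u ((fr k₁ k₂ g (x t)).1) t := h1.sub_const 1
    have := (hu'.pow 2).add (h2.pow 2)
    refine (this.congr_deriv ?_ : HasDerivAt W _ t)
    norm_num <;> ring
  -- key differential inequality
  have hkey : ∀ t : ℝ, 0 ≤ t → W t ≤ δ ^ 2 → deriv W t ≤ -c * W t := by
    intro t ht hWt
    have hd := hderivW t ht
    rw [hd.deriv]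
    have hWt' : u t ^ 2 + v t ^ 2 ≤ δ ^ 2 := hWt
    have hu2 : u t ^ 2 ≤ δ ^ 2 := by nlinarith [sq_nonneg (v t)]
    have hv2 : v t ^ 2 ≤ δ ^ 2 := by nlinarith [sq_nonneg (u t)]
    have huabs : |u t| ≤ δ := by
      rw [← Real.sqrt_sq_eq_abs]
      exact Real.sqrt_le_sqrt hu2 |>.trans_eq (Real.sqrt_sq hδpos.le)
    have hvabs : |v t| ≤ δ := by
      rw [← Real.sqrt_sq_eq_abs]
      exact Real.sqrt_le_sqrt hv2 |>.trans_eq (Real.sqrt_sq hδpos.le)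
    have hub := abs_le.mp huabs
    have hvb := abs_le.mp hvabs
    have hx1 : (x t).1 = u t + 1 := by simp [hu_def]
    have hx2 : (x t).2 = v t := rfl
    simp only [fr, hx1, hx2]
    -- cross term bound
    have hcross : 2 * k₁ * (u t + 1) * (v t ^ 2) * (v t - u t) ≤ (k₂ + g) * v t ^ 2 := by
      have h1 : |2 * k₁ * (u t + 1) * (v t - u t)| ≤ k₂ + g := by
        have e1 : |2 * k₁ * (u t + 1) * (v t - u t)|
            = 2 * k₁ * |u t + 1| * |v t - u t| := by
          rw [abs_mul, abs_mul]
          rw [abs_of_nonneg (by positivity : (0:ℝ) ≤ 2 * k₁)]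
        have h2 : |u t + 1| ≤ 2 := by
          calc |u t + 1| ≤ |u t| + 1 := by simpa using abs_add_le (u t) 1
            _ ≤ 2 := by linarith
        have h3 : |v t - u t| ≤ 2 * δ := by
          calc |v t - u t| ≤ |v t| + |u t| := abs_sub _ _
            _ ≤ 2 * δ := by linarith
        rw [e1]
        calc 2 * k₁ * |u t + 1| * |v t - u t| ≤ 2 * k₁ * 2 * (2 * δ) := by
              have h4 : 2 * k₁ * |u t + 1| ≤ 2 * k₁ * 2 :=
                mul_le_mul_of_nonneg_left h2 (by positivity)
              nlinarith [abs_nonneg (v t - u t), abs_nonneg (u t + 1)]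
          _ ≤ k₂ + g := by nlinarith
      calc 2 * k₁ * (u t + 1) * (v t ^ 2) * (v t - u t)
          = (2 * k₁ * (u t + 1) * (v t - u t)) * v t ^ 2 := by ring
        _ ≤ |2 * k₁ * (u t + 1) * (v t - u t)| * v t ^ 2 :=
            mul_le_mul_of_nonneg_right (le_abs_self _) (sq_nonneg _)
        _ ≤ (k₂ + g) * v t ^ 2 := mul_le_mul_of_nonneg_right h1 (sq_nonneg _)
    have hc1 : c ≤ 2 * g := min_le_left _ _
    have hc2 : c ≤ k₂ + g := min_le_right _ _
    show _ ≤ -c * (u t ^ 2 + v t ^ 2)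
    nlinarith [sq_nonneg (u t), sq_nonneg (v t)]
  clear_value δ c u v W
  -- initial smallness
  have hW0 : W 0 < δ ^ 2 := by
    have h1 : |u 0| ≤ ‖x 0 - ((1:ℝ), (0:ℝ))‖ := by
      have : u 0 = (x 0 - ((1:ℝ), (0:ℝ))).1 := by simp [hu_def]
      rw [this, ← Real.norm_eq_abs]
      exact norm_fst_le _
    have h2 : |v 0| ≤ ‖x 0 - ((1:ℝ), (0:ℝ))‖ := by
      have : v 0 = (x 0 - ((1:ℝ), (0:ℝ))).2 := by simp [hv_def]
      rw [this, ← Real.norm_eq_abs]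
      exact norm_snd_le _
    have h3 : |u 0| < δ / 2 := lt_of_le_of_lt h1 hinit
    have h4 : |v 0| < δ / 2 := lt_of_le_of_lt h2 hinit
    have h5 : u 0 ^ 2 < (δ / 2) ^ 2 := by
      rw [← sq_abs]; exact pow_lt_pow_left₀ h3 (abs_nonneg _) (by norm_num)
    have h6 : v 0 ^ 2 < (δ / 2) ^ 2 := by
      rw [← sq_abs]; exact pow_lt_pow_left₀ h4 (abs_nonneg _) (by norm_num)
    simp only [hW_def]
    linarith [h5, h6, sq_nonneg δ]
  -- invariance: W t < δ^2 for all t ≥ 0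
  have hinv : ∀ t : ℝ, 0 ≤ t → W t < δ ^ 2 := by
    by_contra hcon
    push_neg at hcon
    obtain ⟨t₁, ht₁0, ht₁⟩ := hcon
    set B : Set ℝ := {t | 0 ≤ t ∧ δ ^ 2 ≤ W t} with hBdef
    have hBne : B.Nonempty := ⟨t₁, ht₁0, ht₁⟩
    have hBclosed : IsClosed B := by
      have : B = {t | 0 ≤ t} ∩ {t | δ ^ 2 ≤ W t} := rfl
      rw [this]
      exact (isClosed_le continuous_const continuous_id).inter
        (isClosed_le continuous_const hW_diff.continuous)
    have hBbdd : BddBelow B := ⟨0, fun t ht => ht.1⟩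
    set t₀ := sInf B with ht₀def
    have ht₀B : t₀ ∈ B := hBclosed.csInf_mem hBne hBbdd
    have ht₀0 : 0 ≤ t₀ := ht₀B.1
    have h0nB : (0:ℝ) ∉ B := fun h => absurd h.2 (not_le.mpr hW0)
    have ht₀pos : 0 < t₀ := ht₀0.lt_of_ne (fun h => h0nB (h ▸ ht₀B))
    have hlt : ∀ t, 0 ≤ t → t < t₀ → W t < δ ^ 2 := by
      intro t ht htlt
      by_contra h
      push_neg at h
      exact absurd (csInf_le hBbdd ⟨ht, h⟩) (not_le.mpr htlt)
    have hanti : AntitoneOn W (Set.Icc 0 t₀) := by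
      apply antitoneOn_of_deriv_nonpos (convex_Icc 0 t₀)
        hW_diff.continuous.continuousOn
        (fun t _ => (hW_diff t).differentiableWithinAt)
      intro t ht
      rw [interior_Icc] at ht
      have hWle : W t ≤ δ ^ 2 := (hlt t ht.1.le ht.2).le
      have h5 := hkey t ht.1.le hWle
      have h6 := mul_nonneg hcpos.le (hW_nonneg t)
      linarith
    have : W t₀ ≤ W 0 := hanti (Set.left_mem_Icc.mpr ht₀0) (Set.mem_Icc.mpr ⟨ht₀0, le_refl _⟩) ht₀0
    linarith [ht₀B.2]
  -- exponential decay: W t * exp (c*t) nonincreasing on [0,∞)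
  have hGanti : AntitoneOn (fun t => W t * Real.exp (c * t)) (Set.Ici 0) := by
    have hGdiff : Differentiable ℝ (fun t => W t * Real.exp (c * t)) :=
      hW_diff.mul ((Real.differentiable_exp.comp ((differentiable_id.const_mul c))))
    apply antitoneOn_of_deriv_nonpos (convex_Ici 0) hGdiff.continuous.continuousOn
      (fun t _ => (hGdiff t).differentiableWithinAt)
    intro t ht
    rw [interior_Ici] at ht
    have hW' := hderivW t ht.le
    have h2 : HasDerivAt (fun s : ℝ => c * s) c t := by
      simpa using (hasDerivAt_id t).const_mul c
    have hexp : HasDerivAt (fun s : ℝ => Real.exp (c * s)) (c * Real.exp (c * t)) t := by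
      simpa [Function.comp_def, mul_comm] using (Real.hasDerivAt_exp (c * t)).comp t h2
    have hG' : HasDerivAt (fun t => W t * Real.exp (c * t))
        (deriv W t * Real.exp (c * t) + W t * (c * Real.exp (c * t))) t :=
      ((hW_diff t).hasDerivAt).mul hexp
    rw [hG'.deriv]
    have hkt := hkey t ht.le (hinv t ht.le).le
    have hexppos : 0 < Real.exp (c * t) := Real.exp_pos _
    have h7 := mul_le_mul_of_nonneg_right hkt hexppos.le
    have h8 : deriv W t * Real.exp (c * t) + W t * (c * Real.exp (c * t))
        ≤ (-c * W t) * Real.exp (c * t) + W t * (c * Real.exp (c * t)) := by linarith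
    calc deriv W t * Real.exp (c * t) + W t * (c * Real.exp (c * t))
        ≤ (-c * W t) * Real.exp (c * t) + W t * (c * Real.exp (c * t)) := h8
      _ = 0 := by ring
  have hWle : ∀ t : ℝ, 0 ≤ t → W t ≤ W 0 * Real.exp (-(c * t)) := by
    intro t ht
    have hG : W t * Real.exp (c * t) ≤ W 0 * Real.exp (c * 0) :=
      hGanti (Set.mem_Ici.mpr le_rfl) (Set.mem_Ici.mpr ht) ht
    rw [mul_zero, Real.exp_zero, mul_one] at hG
    have hexppos : 0 < Real.exp (c * t) := Real.exp_pos _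
    rw [Real.exp_neg]
    rw [← sub_nonneg] at hG ⊢
    calc (0:ℝ) ≤ (W 0 - W t * Real.exp (c * t)) * (Real.exp (c * t))⁻¹ :=
          mul_nonneg hG (by positivity)
      _ = W 0 * (Real.exp (c * t))⁻¹ - W t := by
          field_simp
  -- W tends to 0
  have hWtend : Tendsto W atTop (𝓝 0) := by
    have hup : Tendsto (fun t => W 0 * Real.exp (-(c * t))) atTop (𝓝 0) := by
      have h1 : Tendsto (fun t : ℝ => c * t) atTop atTop :=
        Tendsto.const_mul_atTop hcpos tendsto_id
      have h2 : Tendsto (fun t : ℝ => Real.exp (-(c * t))) atTop (𝓝 0) :=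
        Real.tendsto_exp_atBot.comp (tendsto_neg_atTop_atBot.comp h1)
      simpa using h2.const_mul (W 0)
    apply tendsto_of_tendsto_of_tendsto_of_le_of_le' tendsto_const_nhds hup
    · exact Eventually.of_forall hW_nonneg
    · filter_upwards [eventually_ge_atTop (0:ℝ)] with t ht using hWle t ht
  -- components tend to 0
  have hsq : ∀ f : ℝ → ℝ, (∀ t, f t ^ 2 ≤ W t) → Tendsto f atTop (𝓝 0) := by
    intro f hf
    have h2 : Tendsto (fun t => f t ^ 2) atTop (𝓝 0) := by
      apply tendsto_of_tendsto_of_tendsto_of_le_of_le' tendsto_const_nhds hWtend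
      · exact Eventually.of_forall fun t => sq_nonneg _
      · exact Eventually.of_forall hf
    have h3 : Tendsto (fun t => |f t|) atTop (𝓝 0) := by
      have := (Real.continuous_sqrt.tendsto 0).comp h2
      simpa [Function.comp_def, Real.sqrt_sq_eq_abs] using this
    exact (tendsto_zero_iff_abs_tendsto_zero f).mpr h3
  have hu0 : Tendsto u atTop (𝓝 0) :=
    hsq u (fun t => by simp only [hW_def]; nlinarith [sq_nonneg (v t)])
  have hv0 : Tendsto v atTop (𝓝 0) :=
    hsq v (fun t => by simp only [hW_def]; nlinarith [sq_nonneg (u t)])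
  have hx1 : Tendsto (fun t => (x t).1) atTop (𝓝 1) := by
    have := hu0.add_const 1
    simp only [hu_def, sub_add_cancel, zero_add] at this
    exact this
  have := hx1.prodMk_nhds hv0
  simpa [hv_def] using this
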